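/- Let n ≥ 3 be odd, and let B = (Z/2)[α,β,γ,δ]/⟨α³, β³, γ², β² + βγ, δ^((n+1)/2)⟩ be graded with deg α = deg β = deg γ = 1 and deg δ = 4. Then the top nonzero degree of B is 2n + 2, and the degree-(2n+2) component is 1-dimensional spanned by δ^((n-1)/2) · α² · β². -/

import Mathlib

open MvPolynomial

/-- The mod 2 cohomology ring of the orbit space `Q(1,n)/ℤ₂`:
`(ℤ/2)[α,β,γ,δ]/⟨α³, β³, γ², β² + βγ, δ^((n+1)/2)⟩`, where
`α = X 0`, `β = X 1`, `γ = X 2`, `δ = X 3`. -/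
noncomputable abbrev OrbitCohomology (n : ℕ) : Type :=
  MvPolynomial (Fin 4) (ZMod 2) ⧸
    (Ideal.span {(X 0 : MvPolynomial (Fin 4) (ZMod 2)) ^ 3,
      (X 1) ^ 3, (X 2) ^ 2, (X 1) ^ 2 + (X 1) * (X 2),
      (X 3) ^ ((n + 1) / 2)})

noncomputable def oα (n : ℕ) : OrbitCohomology n := Ideal.Quotient.mk _ (X 0)
noncomputable def oβ (n : ℕ) : OrbitCohomology n := Ideal.Quotient.mk _ (X 1)
noncomputable def oγ (n : ℕ) : OrbitCohomology n := Ideal.Quotient.mk _ (X 2)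
noncomputable def oδ (n : ℕ) : OrbitCohomology n := Ideal.Quotient.mk _ (X 3)

/-- Degree-`j` homogeneous component of the orbit-space cohomology ring, for
the grading with `deg α = deg β = deg γ = 1` and `deg δ = 4`. -/
noncomputable def OrbitComp (n j : ℕ) : Submodule (ZMod 2) (OrbitCohomology n) :=
  Submodule.span (ZMod 2)
    {y | ∃ s : Fin 4 →₀ ℕ, s 0 + s 1 + s 2 + 4 * s 3 = j ∧
      y = Ideal.Quotient.mk _ (monomial s (1 : ZMod 2))}



namespace Stmt8Aux

abbrev P2 : Type := MvPolynomial (Fin 4) (ZMod 2)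

/-- The defining ideal, parametrized by the exponent of `X 3`. -/
noncomputable def J (m : ℕ) : Ideal P2 :=
  Ideal.span {(X 0 : P2) ^ 3, (X 1) ^ 3, (X 2) ^ 2,
    (X 1) ^ 2 + (X 1) * (X 2), (X 3) ^ m}

lemma two_eq_zero : (2 : P2) = 0 := by
  have h1 : (2 : P2) = C (1 + 1 : ZMod 2) := by rw [map_add, C_1]; norm_num
  have h2 : (1 + 1 : ZMod 2) = 0 := by decide
  rw [h1, h2, C_0]

/-- exponent vectors -/
noncomputable def S1 (k : ℕ) : Fin 4 →₀ ℕ :=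
  Finsupp.single 0 2 + Finsupp.single 1 2 + Finsupp.single 3 k

noncomputable def S2 (k : ℕ) : Fin 4 →₀ ℕ :=
  Finsupp.single 0 2 + Finsupp.single 1 1 + Finsupp.single 2 1 + Finsupp.single 3 k

@[simp] lemma S1_0 (k : ℕ) : S1 k 0 = 2 := by simp [S1]
@[simp] lemma S1_1 (k : ℕ) : S1 k 1 = 2 := by simp [S1]
@[simp] lemma S1_2 (k : ℕ) : S1 k 2 = 0 := by simp [S1]
@[simp] lemma S1_3 (k : ℕ) : S1 k 3 = k := by simp [S1]
@[simp] lemma S2_0 (k : ℕ) : S2 k 0 = 2 := by simp [S2]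
@[simp] lemma S2_1 (k : ℕ) : S2 k 1 = 1 := by simp [S2]
@[simp] lemma S2_2 (k : ℕ) : S2 k 2 = 1 := by simp [S2]
@[simp] lemma S2_3 (k : ℕ) : S2 k 3 = k := by simp [S2]

/-- The coefficient functional. -/
noncomputable def L (k : ℕ) (f : P2) : ZMod 2 := coeff (S1 k) f + coeff (S2 k) f

end Stmt8Aux

namespace Stmt8Aux

noncomputable def T (k : ℕ) : Fin 4 →₀ ℕ :=
  Finsupp.single 0 2 + Finsupp.single 3 k

noncomputable def U : Fin 4 →₀ ℕ :=
  Finsupp.single 1 1 + Finsupp.single 2 1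

lemma S1_eqT (k : ℕ) : S1 k = T k + Finsupp.single 1 2 := by
  ext j; fin_cases j <;> simp [S1, T, Finsupp.single_apply]

lemma S2_eqT (k : ℕ) : S2 k = T k + U := by
  ext j; fin_cases j <;> simp [S2, T, U, Finsupp.single_apply]

lemma L_add (k : ℕ) (a b : P2) : L k (a + b) = L k a + L k b := by
  simp only [L, coeff_add]; ring

lemma X1_mul_X2 : (X 1 : P2) * X 2 = monomial U 1 := by
  have h : (X 1 : P2) * X 2 = X 1 ^ 1 * X 2 ^ 1 := by ring
  rw [h, X_pow_eq_monomial, X_pow_eq_monomial, monomial_mul, one_mul, U]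

lemma L_zero_of_mem (k : ℕ) : ∀ f ∈ J (k + 1), ∀ q : P2, L k (q * f) = 0 := by
  intro f hf
  refine Submodule.span_induction ?_ ?_ ?_ ?_ hf
  · rintro x hx q
    have hadd : ∀ a : ZMod 2, a + a = 0 := by decide
    simp only [Set.mem_insert_iff, Set.mem_singleton_iff] at hx
    rcases hx with rfl | rfl | rfl | rfl | rfl
    · simp only [L, X_pow_eq_monomial, coeff_mul_monomial']
      rw [if_neg, if_neg, add_zero]
      · rw [Finsupp.single_le_iff, S2_0]; omega
      · rw [Finsupp.single_le_iff, S1_0]; omega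
    · simp only [L, X_pow_eq_monomial, coeff_mul_monomial']
      rw [if_neg, if_neg, add_zero]
      · rw [Finsupp.single_le_iff, S2_1]; omega
      · rw [Finsupp.single_le_iff, S1_1]; omega
    · simp only [L, X_pow_eq_monomial, coeff_mul_monomial']
      rw [if_neg, if_neg, add_zero]
      · rw [Finsupp.single_le_iff, S2_2]; omega
      · rw [Finsupp.single_le_iff, S1_2]; omega
    · have e1 : coeff (S1 k) (q * ((X 1 : P2) * X 2)) = 0 := by
        rw [X1_mul_X2, coeff_mul_monomial', if_neg]
        intro h
        have := Finsupp.le_def.mp h 2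
        simp [U] at this
      have e2 : coeff (S2 k) (q * ((X 1 : P2) ^ 2)) = 0 := by
        rw [X_pow_eq_monomial, coeff_mul_monomial', if_neg]
        rw [Finsupp.single_le_iff, S2_1]; omega
      have e3 : coeff (S1 k) (q * ((X 1 : P2) ^ 2)) = coeff (T k) q := by
        rw [X_pow_eq_monomial, S1_eqT, coeff_mul_monomial, mul_one]
      have e4 : coeff (S2 k) (q * ((X 1 : P2) * X 2)) = coeff (T k) q := by
        rw [X1_mul_X2, S2_eqT, coeff_mul_monomial, mul_one]
      rw [mul_add, L_add]
      simp only [L]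
      rw [e1, e2, e3, e4, add_zero, zero_add, hadd]
    · simp only [L, X_pow_eq_monomial, coeff_mul_monomial']
      rw [if_neg, if_neg, add_zero]
      · rw [Finsupp.single_le_iff, S2_3]; omega
      · rw [Finsupp.single_le_iff, S1_3]; omega
  · intro q; simp [L]
  · intro x y _ _ px py q
    rw [mul_add, L_add, px q, py q, add_zero]
  · intro a x _ px q
    rw [smul_eq_mul, ← mul_assoc]
    exact px (q * a)

lemma target_not_mem (k : ℕ) : monomial (S1 k) (1 : ZMod 2) ∉ J (k + 1) := by
  intro h
  have h0 := L_zero_of_mem k _ h 1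
  rw [one_mul] at h0
  have c1 : coeff (S1 k) (monomial (S1 k) (1 : ZMod 2)) = 1 := by simp
  have c2 : coeff (S2 k) (monomial (S1 k) (1 : ZMod 2)) = 0 := by
    rw [coeff_monomial, if_neg]
    intro hss
    have := congrArg (fun f => f 1) hss
    simp at this
  rw [L, c1, c2, add_zero] at h0
  exact one_ne_zero h0

end Stmt8Aux

namespace Stmt8Aux

lemma g1_mem (m : ℕ) : (X 0 : P2) ^ 3 ∈ J m := Ideal.subset_span (by simp)
lemma g2_mem (m : ℕ) : (X 1 : P2) ^ 3 ∈ J m := Ideal.subset_span (by simp)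
lemma g3_mem (m : ℕ) : (X 2 : P2) ^ 2 ∈ J m := Ideal.subset_span (by simp)
lemma g4_mem (m : ℕ) : (X 1 : P2) ^ 2 + X 1 * X 2 ∈ J m := Ideal.subset_span (by simp)
lemma g5_mem (m : ℕ) : (X 3 : P2) ^ m ∈ J m := Ideal.subset_span (by simp)

lemma mono_mem {m : ℕ} {s : Fin 4 →₀ ℕ} {i : Fin 4} {e : ℕ}
    (hg : (X i : P2) ^ e ∈ J m) (h : e ≤ s i) : monomial s (1 : ZMod 2) ∈ J m := by
  have hs : s = (s - Finsupp.single i e) + Finsupp.single i e := by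
    ext j
    rw [Finsupp.add_apply, Finsupp.tsub_apply]
    rcases eq_or_ne j i with rfl | hj
    · simp [Nat.sub_add_cancel h]
    · simp [Finsupp.single_eq_of_ne' (Ne.symm hj)]
  have : monomial s (1 : ZMod 2) = monomial (s - Finsupp.single i e) 1 * (X i ^ e) := by
    rw [X_pow_eq_monomial, monomial_mul, one_mul, ← hs]
  rw [this]
  exact Ideal.mul_mem_left _ _ hg

lemma mono4 (a b c d : ℕ) :
    (monomial (Finsupp.single 0 a + Finsupp.single 1 b + Finsupp.single 2 c +
      Finsupp.single 3 d) (1 : ZMod 2) : P2) = X 0 ^ a * X 1 ^ b * X 2 ^ c * X 3 ^ d := by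
  rw [X_pow_eq_monomial, X_pow_eq_monomial, X_pow_eq_monomial, X_pow_eq_monomial,
    monomial_mul, monomial_mul, monomial_mul]
  simp

lemma sdecomp (s : Fin 4 →₀ ℕ) :
    s = Finsupp.single 0 (s 0) + Finsupp.single 1 (s 1) + Finsupp.single 2 (s 2) +
      Finsupp.single 3 (s 3) := by
  ext j; fin_cases j <;> simp [Finsupp.single_apply]

lemma mono_eq (s : Fin 4 →₀ ℕ) :
    (monomial s (1 : ZMod 2) : P2) = X 0 ^ s 0 * X 1 ^ s 1 * X 2 ^ s 2 * X 3 ^ s 3 := by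
  conv_lhs => rw [sdecomp s]
  rw [mono4]

lemma S1_eq_X (k : ℕ) :
    (monomial (S1 k) (1 : ZMod 2) : P2) = X 0 ^ 2 * X 1 ^ 2 * X 2 ^ 0 * X 3 ^ k := by
  rw [mono_eq, S1_0, S1_1, S1_2, S1_3]

lemma mem_case121 (m t : ℕ) : (X 0 : P2) ^ 1 * X 1 ^ 2 * X 2 ^ 1 * X 3 ^ t ∈ J m := by
  have hid : (X 0 : P2) ^ 1 * X 1 ^ 2 * X 2 ^ 1 * X 3 ^ t =
      (X 0 * X 2 * X 3 ^ t) * ((X 1) ^ 2 + X 1 * X 2) +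
        (X 0 * X 1 * X 3 ^ t) * (X 2) ^ 2 := by
    linear_combination (-(X 0 * X 1 * (X 2 : P2) ^ 2 * X 3 ^ t)) * two_eq_zero
  rw [hid]
  exact add_mem (Ideal.mul_mem_left _ _ (g4_mem m)) (Ideal.mul_mem_left _ _ (g3_mem m))

lemma mem_case221 (m t : ℕ) : (X 0 : P2) ^ 2 * X 1 ^ 2 * X 2 ^ 1 * X 3 ^ t ∈ J m := by
  have hid : (X 0 : P2) ^ 2 * X 1 ^ 2 * X 2 ^ 1 * X 3 ^ t =
      (X 0 ^ 2 * X 2 * X 3 ^ t) * ((X 1) ^ 2 + X 1 * X 2) +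
        (X 0 ^ 2 * X 1 * X 3 ^ t) * (X 2) ^ 2 := by
    linear_combination (-((X 0 : P2) ^ 2 * X 1 * X 2 ^ 2 * X 3 ^ t)) * two_eq_zero
  rw [hid]
  exact add_mem (Ideal.mul_mem_left _ _ (g4_mem m)) (Ideal.mul_mem_left _ _ (g3_mem m))

lemma sub_case211 (m t : ℕ) :
    (X 0 : P2) ^ 2 * X 1 ^ 1 * X 2 ^ 1 * X 3 ^ t -
      X 0 ^ 2 * X 1 ^ 2 * X 2 ^ 0 * X 3 ^ t ∈ J m := by
  have hid : (X 0 : P2) ^ 2 * X 1 ^ 1 * X 2 ^ 1 * X 3 ^ t -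
      X 0 ^ 2 * X 1 ^ 2 * X 2 ^ 0 * X 3 ^ t =
      (X 0 ^ 2 * X 3 ^ t) * ((X 1) ^ 2 + X 1 * X 2) := by
    linear_combination (-((X 0 : P2) ^ 2 * X 1 ^ 2 * X 3 ^ t)) * two_eq_zero
  rw [hid]
  exact Ideal.mul_mem_left _ _ (g4_mem m)

end Stmt8Aux

open Stmt8Aux in
/-- For `n ≥ 3` odd: the top nonzero degree of the orbit-space cohomology is
`2n+2`, where the degree-`(2n+2)` component is 1-dimensional, spanned by
`δ^((n-1)/2)·α²·β²`. -/
theorem stmt8 (n : ℕ) (hn : 3 ≤ n) (hodd : Odd n) :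
    OrbitComp n (2 * n + 2) =
        Submodule.span (ZMod 2)
          {(oδ n) ^ ((n - 1) / 2) * (oα n) ^ 2 * (oβ n) ^ 2} ∧
      Module.finrank (ZMod 2) (OrbitComp n (2 * n + 2)) = 1 ∧
      OrbitComp n (2 * n + 2) ≠ ⊥ ∧
      ∀ j, 2 * n + 2 < j → OrbitComp n j = ⊥ := by
  obtain ⟨t, ht⟩ := hodd
  have hm : (n + 1) / 2 = t + 1 := by omega
  have hk : (n - 1) / 2 = t := by omega
  set Qmk : P2 →+* OrbitCohomology n := Ideal.Quotient.mk (J ((n + 1) / 2)) with hQmk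
  set top : OrbitCohomology n := (oδ n) ^ ((n - 1) / 2) * (oα n) ^ 2 * (oβ n) ^ 2 with htop
  have topEq : top = Qmk (monomial (S1 t) 1) := by
    rw [htop, hk, S1_eq_X]
    show Qmk (X 3) ^ t * Qmk (X 0) ^ 2 * Qmk (X 1) ^ 2 = _
    rw [← map_pow, ← map_pow, ← map_pow, ← map_mul, ← map_mul]
    congr 1
    ring
  have htopne : top ≠ 0 := by
    rw [topEq]
    intro h
    exact target_not_mem t (hm ▸ Ideal.Quotient.eq_zero_iff_mem.mp h)
  have main1 : OrbitComp n (2 * n + 2) = Submodule.span (ZMod 2) {top} := by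
    apply le_antisymm
    · rw [OrbitComp]
      apply Submodule.span_le.mpr
      rintro y ⟨s, hdeg, rfl⟩
      rw [SetLike.mem_coe]
      by_cases h0 : 3 ≤ s 0
      · rw [show (Ideal.Quotient.mk _ (monomial s (1 : ZMod 2)) : OrbitCohomology n) = 0 from
          Ideal.Quotient.eq_zero_iff_mem.mpr (mono_mem (g1_mem _) h0)]
        exact Submodule.zero_mem _
      by_cases h1 : 3 ≤ s 1
      · rw [show (Ideal.Quotient.mk _ (monomial s (1 : ZMod 2)) : OrbitCohomology n) = 0 from
          Ideal.Quotient.eq_zero_iff_mem.mpr (mono_mem (g2_mem _) h1)]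
        exact Submodule.zero_mem _
      by_cases h2 : 2 ≤ s 2
      · rw [show (Ideal.Quotient.mk _ (monomial s (1 : ZMod 2)) : OrbitCohomology n) = 0 from
          Ideal.Quotient.eq_zero_iff_mem.mpr (mono_mem (g3_mem _) h2)]
        exact Submodule.zero_mem _
      by_cases h3 : (n + 1) / 2 ≤ s 3
      · rw [show (Ideal.Quotient.mk _ (monomial s (1 : ZMod 2)) : OrbitCohomology n) = 0 from
          Ideal.Quotient.eq_zero_iff_mem.mpr (mono_mem (g5_mem _) h3)]
        exact Submodule.zero_mem _
      push_neg at h0 h1 h2 h3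
      rw [hm] at h3
      have hcase : (s 0 = 2 ∧ s 1 = 2 ∧ s 2 = 0 ∧ s 3 = t) ∨
          (s 0 = 2 ∧ s 1 = 1 ∧ s 2 = 1 ∧ s 3 = t) ∨
          (s 0 = 1 ∧ s 1 = 2 ∧ s 2 = 1 ∧ s 3 = t) := by omega
      rcases hcase with ⟨e0, e1, e2, e3⟩ | ⟨e0, e1, e2, e3⟩ | ⟨e0, e1, e2, e3⟩
      · have : (Ideal.Quotient.mk _ (monomial s (1 : ZMod 2)) : OrbitCohomology n) = top := by
          rw [topEq, S1_eq_X, mono_eq, e0, e1, e2, e3]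
          rfl
        rw [this]
        exact Submodule.mem_span_singleton_self top
      · have : (Ideal.Quotient.mk _ (monomial s (1 : ZMod 2)) : OrbitCohomology n) = top := by
          rw [topEq, S1_eq_X, mono_eq, e0, e1, e2, e3]
          exact (Ideal.Quotient.mk_eq_mk_iff_sub_mem _ _).mpr (sub_case211 _ t)
        rw [this]
        exact Submodule.mem_span_singleton_self top
      · rw [show (Ideal.Quotient.mk _ (monomial s (1 : ZMod 2)) : OrbitCohomology n) = 0 by
          rw [mono_eq, e0, e1, e2, e3]
          exact Ideal.Quotient.eq_zero_iff_mem.mpr (mem_case121 _ t)]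
        exact Submodule.zero_mem _
    · rw [Submodule.span_le, Set.singleton_subset_iff, OrbitComp]
      apply Submodule.subset_span
      refine ⟨S1 t, ?_, ?_⟩
      · rw [S1_0, S1_1, S1_2, S1_3]; omega
      · exact topEq
  refine ⟨main1, ?_, ?_, ?_⟩
  · rw [main1]
    exact finrank_span_singleton htopne
  · rw [main1]
    exact fun h => htopne (Submodule.span_singleton_eq_bot.mp h)
  · intro j hj
    rw [OrbitComp, Submodule.span_eq_bot]
    rintro y ⟨s, hdeg, rfl⟩
    by_cases h0 : 3 ≤ s 0
    · exact Ideal.Quotient.eq_zero_iff_mem.mpr (mono_mem (g1_mem _) h0)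
    by_cases h1 : 3 ≤ s 1
    · exact Ideal.Quotient.eq_zero_iff_mem.mpr (mono_mem (g2_mem _) h1)
    by_cases h2 : 2 ≤ s 2
    · exact Ideal.Quotient.eq_zero_iff_mem.mpr (mono_mem (g3_mem _) h2)
    by_cases h3 : (n + 1) / 2 ≤ s 3
    · exact Ideal.Quotient.eq_zero_iff_mem.mpr (mono_mem (g5_mem _) h3)
    push_neg at h0 h1 h2 h3
    rw [hm] at h3
    have hcase : s 0 = 2 ∧ s 1 = 2 ∧ s 2 = 1 ∧ s 3 = t := by omega
    obtain ⟨e0, e1, e2, e3⟩ := hcase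
    rw [mono_eq, e0, e1, e2, e3]
    exact Ideal.Quotient.eq_zero_iff_mem.mpr (mem_case221 _ t)
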